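/- arXiv:0911.3813 — 2 statements merged into one kernel-verified Lean document; each statement's English description precedes it below -/
import Mathlib

section
/- Let n, q ≥ 1 and s ∈ ℝ, let κ be the group action on H^s(ℝ^n) given by (κ_λ v)(x) := λ^{n/2} v(λx), and for u ∈ 𝒮(ℝ^{q+n}, ℂ) let (F_{y→η}u)(η, ·) denote the partial Fourier transform in the first q variables. Then for every u ∈ 𝒮(ℝ^{q+n}): ∫_{ℝ^q} ⟨η⟩^{2s} ‖κ_{⟨η⟩}^{−1} (F_{y→η}u)(η, ·)‖²_{H^s(ℝ^n)} dη = ∫_{ℝ^q} ∫_{ℝ^n} (1+|η|²+|ξ|²)^s |(Fu)(η,ξ)|² dξ dη, i.e. the 𝒲^s(ℝ^q, H^s(ℝ^n))-norm of u equals its H^s(ℝ^{q+n})-norm, so that 𝒲^s(ℝ^q, H^s(ℝ^n)) = H^s(ℝ^q × ℝ^n). -/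
open MeasureTheory Complex
open scoped ENNReal NNReal

noncomputable section

/-- `ℝ^m` as a Euclidean space. -/
abbrev Eucl (m : ℕ) := EuclideanSpace ℝ (Fin m)

/-- The "Japanese bracket" `⟨η⟩ = (1+|η|²)^(1/2)`. -/
def jap {m : ℕ} (η : Eucl m) : ℝ := Real.sqrt (1 + ‖η‖ ^ 2)

/-- Partial Fourier transform in the first group of variables:
`(F_{y→η}u)(η, x) = ∫ e^{−i y·η} u(y, x) dy`. -/
def partialFT {q n : ℕ} (u : Eucl q × Eucl n → ℂ) (η : Eucl q) (x : Eucl n) : ℂ :=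
  ∫ y, Complex.exp (-Complex.I * ((inner ℝ y η : ℝ) : ℂ)) * u (y, x)

/-- The Fourier transform on `ℝ^n`: `v̂(ξ) = ∫ e^{−i x·ξ} v(x) dx`. -/
def ftn {n : ℕ} (v : Eucl n → ℂ) (ξ : Eucl n) : ℂ :=
  ∫ x, Complex.exp (-Complex.I * ((inner ℝ x ξ : ℝ) : ℂ)) * v x

/-- The full Fourier transform on `ℝ^q × ℝ^n`. -/
def fullFT {q n : ℕ} (u : Eucl q × Eucl n → ℂ) (η : Eucl q) (ξ : Eucl n) : ℂ :=
  ∫ w : Eucl q × Eucl n,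
    Complex.exp (-Complex.I * (((inner ℝ w.1 η : ℝ) + (inner ℝ w.2 ξ : ℝ) : ℝ) : ℂ)) * u w

instance auxHaarProd {q n : ℕ} : (volume : Measure (Eucl q × Eucl n)).IsAddHaarMeasure :=
  Measure.volume_eq_prod (Eucl q) (Eucl n) ▸ Measure.prod.instIsAddHaarMeasure _ _

lemma aux_norm_exp (r : ℝ) : ‖Complex.exp (-Complex.I * (r : ℂ))‖ = 1 := by
  rw [Complex.norm_exp]
  simp

lemma aux_lint_smul {n : ℕ} (f : Eucl n → ℝ≥0∞) (R : ℝ) (hR : R ≠ 0) :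
    ∫⁻ x, f (R • x) = ENNReal.ofReal |(R ^ n)⁻¹| * ∫⁻ x, f x := by
  rw [show (fun x : Eucl n => f (R • x))
      = fun x => f ((Homeomorph.smulOfNeZero R hR).toMeasurableEquiv x) from rfl]
  rw [← lintegral_map_equiv f (Homeomorph.smulOfNeZero R hR).toMeasurableEquiv]
  rw [show (⇑(Homeomorph.smulOfNeZero R hR).toMeasurableEquiv)
      = fun x : Eucl n => R • x from rfl]
  rw [Measure.map_addHaar_smul (volume : Measure (Eucl n)) hR, lintegral_smul_measure,
    finrank_euclideanSpace_fin, smul_eq_mul]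

lemma aux_fullFT_eq {q n : ℕ} (u : SchwartzMap (Eucl q × Eucl n) ℂ) (η : Eucl q) (ξ : Eucl n) :
    fullFT (⇑u) η ξ = ftn (partialFT (⇑u) η) ξ := by
  have hsplit : ∀ (y : Eucl q) (x : Eucl n),
      Complex.exp (-Complex.I * (((inner ℝ y η : ℝ) + (inner ℝ x ξ : ℝ) : ℝ) : ℂ)) * u (y, x)
      = Complex.exp (-Complex.I * ((inner ℝ x ξ : ℝ) : ℂ)) *
          (Complex.exp (-Complex.I * ((inner ℝ y η : ℝ) : ℂ)) * u (y, x)) := by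
    intro y x
    rw [show (-Complex.I * (((inner ℝ y η : ℝ) + (inner ℝ x ξ : ℝ) : ℝ) : ℂ))
        = -Complex.I * ((inner ℝ x ξ : ℝ) : ℂ) + -Complex.I * ((inner ℝ y η : ℝ) : ℂ) by
      push_cast; ring]
    rw [Complex.exp_add, mul_assoc]
  have hcont : Continuous (fun w : Eucl q × Eucl n =>
      Complex.exp (-Complex.I * (((inner ℝ w.1 η : ℝ) + (inner ℝ w.2 ξ : ℝ) : ℝ) : ℂ))) := by
    refine Complex.continuous_exp.comp (continuous_const.mul ?_)
    exact Complex.continuous_ofReal.comp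
      ((continuous_fst.inner continuous_const).add (continuous_snd.inner continuous_const))
  have hint : Integrable (fun w : Eucl q × Eucl n =>
      Complex.exp (-Complex.I * (((inner ℝ w.1 η : ℝ) + (inner ℝ w.2 ξ : ℝ) : ℝ) : ℂ)) * u w)
      volume :=
    u.integrable.bdd_mul hcont.aestronglyMeasurable
      (c := 1) (Filter.Eventually.of_forall fun w => le_of_eq (aux_norm_exp _))
  rw [fullFT, Measure.volume_eq_prod] at *
  rw [integral_prod_symm _ hint]
  unfold ftn partialFT
  simp_rw [hsplit, integral_const_mul]

lemma aux_ftn_scale {n : ℕ} (g : Eucl n → ℂ) (c lam : ℝ) (hl : 0 < lam) (ξ : Eucl n) :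
    ftn (fun x => c • g (lam⁻¹ • x)) ξ = (c * lam ^ n) • ftn g (lam • ξ) := by
  unfold ftn
  have h1 : ∀ x : Eucl n,
      Complex.exp (-Complex.I * ((inner ℝ x ξ : ℝ) : ℂ)) * (c • g (lam⁻¹ • x))
      = c • (Complex.exp (-Complex.I * ((inner ℝ (lam⁻¹ • x) (lam • ξ) : ℝ) : ℂ)) *
          g (lam⁻¹ • x)) := by
    intro x
    rw [mul_smul_comm]
    congr 3
    rw [real_inner_smul_left, real_inner_smul_right, ← mul_assoc,
      inv_mul_cancel₀ hl.ne', one_mul]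
  simp_rw [h1]
  rw [integral_smul]
  have key := Measure.integral_comp_smul_of_nonneg (volume : Measure (Eucl n))
    (fun z : Eucl n => Complex.exp (-Complex.I * ((inner ℝ z (lam • ξ) : ℝ) : ℂ)) * g z) lam⁻¹
    (hR := inv_nonneg.2 hl.le)
  rw [key, finrank_euclideanSpace_fin, inv_pow, inv_inv, smul_smul]

lemma aux_sqrt_rpow {a : ℝ} (ha : 0 ≤ a) (s : ℝ) : Real.sqrt a ^ (2 * s) = a ^ s := by
  rw [Real.sqrt_eq_rpow, ← Real.rpow_mul ha, show (1/2 : ℝ) * (2 * s) = s by ring]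

lemma aux_jap_alg {q n : ℕ} (η : Eucl q) (ζ : Eucl n) (s : ℝ) :
    jap η ^ (2 * s) * jap ((jap η)⁻¹ • ζ) ^ (2 * s) = (1 + ‖η‖ ^ 2 + ‖ζ‖ ^ 2) ^ s := by
  have h1 : (0:ℝ) ≤ 1 + ‖η‖ ^ 2 := by positivity
  have h1' : (0:ℝ) < 1 + ‖η‖ ^ 2 := by positivity
  have hl : 0 < jap η := Real.sqrt_pos.2 h1'
  have hζ : ‖(jap η)⁻¹ • ζ‖ ^ 2 = (1 + ‖η‖ ^ 2)⁻¹ * ‖ζ‖ ^ 2 := by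
    rw [norm_smul, mul_pow, Real.norm_eq_abs, _root_.abs_of_nonneg (inv_nonneg.2 hl.le),
      inv_pow, jap, Real.sq_sqrt h1]
  have hjapη : jap η ^ (2 * s) = (1 + ‖η‖ ^ 2) ^ s := aux_sqrt_rpow h1 s
  have hjapζ : jap ((jap η)⁻¹ • ζ) ^ (2 * s)
      = (1 + (1 + ‖η‖ ^ 2)⁻¹ * ‖ζ‖ ^ 2) ^ s := by
    rw [jap, hζ]; exact aux_sqrt_rpow (by positivity) s
  rw [hjapη, hjapζ, ← Real.mul_rpow h1 (by positivity)]
  congr 1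
  field_simp


/-- `𝒲^s(ℝ^q, H^s(ℝ^n)) = H^s(ℝ^q × ℝ^n)`:  with the group action
`(κ_λ v)(x) = λ^{n/2} v(λx)` on `H^s(ℝ^n)` (whose inverse is
`(κ_λ^{-1} v)(x) = λ^{-n/2} v(λ^{-1}x)`), the `𝒲^s(ℝ^q,H^s(ℝ^n))`-norm of a Schwartz
function `u` on `ℝ^q × ℝ^n` — computed via the `H^s(ℝ^n)`-norm
`‖v‖² = ∫ ⟨ξ⟩^{2s} |v̂(ξ)|² dξ` — equals its `H^s(ℝ^{q+n})`-norm
`∫∫ (1+|η|²+|ξ|²)^s |(Fu)(η,ξ)|² dξ dη`. -/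
theorem stmt7 {q n : ℕ} (hq : 1 ≤ q) (hn : 1 ≤ n) (s : ℝ)
    (u : SchwartzMap (Eucl q × Eucl n) ℂ) :
    (∫⁻ η, ENNReal.ofReal (jap η ^ (2 * s)) *
        ∫⁻ ξ, ENNReal.ofReal (jap ξ ^ (2 * s)) *
          ((‖ftn (fun x => (jap η ^ (-(n : ℝ) / 2) : ℝ) •
              partialFT (⇑u) η ((jap η)⁻¹ • x)) ξ‖₊ : ℝ≥0∞) ^ 2))
      = ∫⁻ η, ∫⁻ ξ,
          ENNReal.ofReal ((1 + ‖η‖ ^ 2 + ‖ξ‖ ^ 2) ^ s) *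
            ((‖fullFT (⇑u) η ξ‖₊ : ℝ≥0∞) ^ 2) := by
  apply lintegral_congr
  intro η
  have h1' : (0:ℝ) < 1 + ‖η‖ ^ 2 := by positivity
  have hl : 0 < jap η := Real.sqrt_pos.2 h1'
  have hs : ∀ ξ : Eucl n,
      ftn (fun x => (jap η ^ (-(n : ℝ) / 2) : ℝ) • partialFT (⇑u) η ((jap η)⁻¹ • x)) ξ
      = (jap η ^ ((n : ℝ) / 2) : ℝ) • fullFT (⇑u) η (jap η • ξ) := by
    intro ξ
    rw [aux_ftn_scale (partialFT (⇑u) η) _ (jap η) hl ξ, ← aux_fullFT_eq]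
    congr 1
    rw [← Real.rpow_natCast (jap η) n, ← Real.rpow_add hl]
    congr 1
    ring
  have hnorm : ∀ ξ : Eucl n,
      ((‖ftn (fun x => (jap η ^ (-(n : ℝ) / 2) : ℝ) •
          partialFT (⇑u) η ((jap η)⁻¹ • x)) ξ‖₊ : ℝ≥0∞) ^ 2)
      = ENNReal.ofReal (jap η ^ (n : ℝ)) *
          ((‖fullFT (⇑u) η (jap η • ξ)‖₊ : ℝ≥0∞) ^ 2) := by
    intro ξ
    rw [hs ξ, nnnorm_smul, ENNReal.coe_mul, mul_pow]
    congr 1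
    rw [← enorm_eq_nnnorm, Real.enorm_eq_ofReal (Real.rpow_nonneg hl.le _),
      ← ENNReal.ofReal_pow (Real.rpow_nonneg hl.le _)]
    congr 1
    rw [← Real.rpow_natCast (jap η ^ ((n:ℝ)/2)) 2, ← Real.rpow_mul hl.le]
    norm_num
  simp_rw [hnorm]
  have hconst : ∀ ξ : Eucl n,
      ENNReal.ofReal (jap ξ ^ (2 * s)) *
        (ENNReal.ofReal (jap η ^ (n : ℝ)) * ((‖fullFT (⇑u) η (jap η • ξ)‖₊ : ℝ≥0∞) ^ 2))
      = ENNReal.ofReal (jap η ^ (n : ℝ)) *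
          (ENNReal.ofReal (jap ((jap η)⁻¹ • jap η • ξ) ^ (2 * s)) *
            ((‖fullFT (⇑u) η (jap η • ξ)‖₊ : ℝ≥0∞) ^ 2)) := by
    intro ξ
    rw [smul_smul, inv_mul_cancel₀ hl.ne', one_smul]
    ring
  simp_rw [hconst]
  rw [lintegral_const_mul' _ _ ENNReal.ofReal_ne_top]
  have key := aux_lint_smul (fun ζ : Eucl n =>
    ENNReal.ofReal (jap ((jap η)⁻¹ • ζ) ^ (2 * s)) *
      ((‖fullFT (⇑u) η ζ‖₊ : ℝ≥0∞) ^ 2)) (jap η) hl.ne'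
  rw [key]
  rw [show ENNReal.ofReal (jap η ^ (n : ℝ)) *
      (ENNReal.ofReal |((jap η ^ n : ℝ))⁻¹| *
        ∫⁻ ζ, ENNReal.ofReal (jap ((jap η)⁻¹ • ζ) ^ (2 * s)) *
          ((‖fullFT (⇑u) η ζ‖₊ : ℝ≥0∞) ^ 2))
      = ∫⁻ ζ, ENNReal.ofReal (jap ((jap η)⁻¹ • ζ) ^ (2 * s)) *
          ((‖fullFT (⇑u) η ζ‖₊ : ℝ≥0∞) ^ 2) by
    rw [← mul_assoc, _root_.abs_of_nonneg (inv_nonneg.2 (pow_nonneg hl.le n)),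
      ← ENNReal.ofReal_mul (Real.rpow_nonneg hl.le _), Real.rpow_natCast,
      mul_inv_cancel₀ (pow_ne_zero _ hl.ne'), ENNReal.ofReal_one, one_mul]]
  rw [← lintegral_const_mul' _ _ ENNReal.ofReal_ne_top]
  apply lintegral_congr
  intro ζ
  rw [← mul_assoc, ← ENNReal.ofReal_mul (Real.rpow_nonneg hl.le (2 * s)),
    aux_jap_alg η ζ s]
end
end

section
/- Let P ⊆ ℂ and f : ℂ ∖ P → ℂ be a (scalar) smoothing Mellin symbol with asymptotic type P, i.e.: P is closed, P ∩ {z : c ≤ Re z ≤ c'} is finite for all reals c ≤ c'; f is holomorphic on ℂ ∖ P and at every point of P it has at worst a pole (f is meromorphic on ℂ); and for all reals c ≤ c' and every N ∈ ℕ there exist C, T > 0 such that |f(z)| ≤ C·(1+|Im z|)^{−N} whenever c ≤ Re z ≤ c' and |Im z| ≥ T. Then there exist a set Q ⊆ ℂ and a function l : ℂ ∖ Q → ℂ which is a smoothing Mellin symbol with asymptotic type Q (satisfying the same three conditions, with Q in place of P), such that (1 + f(z)) · (1 + l(z)) = 1 for all z ∈ ℂ ∖ (P ∪ Q). -/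
open Complex

noncomputable section

/-- A Mellin asymptotic type: a closed subset of `ℂ` meeting each strip
`{c ≤ Re z ≤ c'}` in a finite set. -/
def MellinAsympType (P : Set ℂ) : Prop :=
  IsClosed P ∧ ∀ c c' : ℝ, (P ∩ {z : ℂ | c ≤ z.re ∧ z.re ≤ c'}).Finite

/-- A (scalar) smoothing Mellin symbol with asymptotic type `P`: a function holomorphic on
`ℂ ∖ P`, meromorphic on `ℂ` (at worst poles at the points of `P`), which decays faster than
any power of `(1+|Im z|)⁻¹` as `|Im z| → ∞`, uniformly on strips of finite width. -/
def SmoothingMellinSymbol (P : Set ℂ) (f : ℂ → ℂ) : Prop :=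
  MellinAsympType P ∧
  DifferentiableOn ℂ f Pᶜ ∧
  (∀ p ∈ P, MeromorphicAt f p) ∧
  ∀ c c' : ℝ, c ≤ c' → ∀ N : ℕ, ∃ C > (0 : ℝ), ∃ T > (0 : ℝ), ∀ z : ℂ,
    c ≤ z.re → z.re ≤ c' → T ≤ |z.im| →
      ‖f z‖ ≤ C * (1 + |z.im|) ^ (-(N : ℝ))

section Aux

open Filter Topology

variable {P : Set ℂ} {f : ℂ → ℂ}

/-- An asymptotic type is countable. -/
lemma MellinAsympType.countable (hP : MellinAsympType P) : P.Countable := by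
  have h : P ⊆ ⋃ n : ℕ, P ∩ {z : ℂ | -(n : ℝ) ≤ z.re ∧ z.re ≤ (n : ℝ)} := by
    intro z hz
    refine Set.mem_iUnion.2 ⟨⌈|z.re|⌉₊, hz, ?_, ?_⟩
    · have := (Nat.le_ceil |z.re|)
      have h2 : -((⌈|z.re|⌉₊ : ℝ)) ≤ -|z.re| := by linarith
      exact le_trans h2 (neg_abs_le _)
    · exact le_trans (le_abs_self _) (Nat.le_ceil _)
  exact Set.Countable.mono h
    (Set.countable_iUnion fun n => (hP.2 (-(n : ℝ)) (n : ℝ)).countable)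

/-- The complement of an asymptotic type is preconnected. -/
lemma MellinAsympType.isPreconnected_compl (hP : MellinAsympType P) :
    IsPreconnected Pᶜ :=
  (hP.countable.isPathConnected_compl_of_one_lt_rank
    (by rw [Complex.rank_real_complex]; norm_num)).isConnected.isPreconnected

/-- Points are eventually (in the punctured neighborhood sense) outside of an
asymptotic type. -/
lemma MellinAsympType.eventually_not_mem (hP : MellinAsympType P) (x : ℂ) :
    ∀ᶠ z in 𝓝[≠] x, z ∉ P := by
  set S : Set ℂ := {z : ℂ | x.re - 1 ≤ z.re ∧ z.re ≤ x.re + 1} with hS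
  have hFfin : ((P ∩ S) \ {x}).Finite :=
    ((hP.2 (x.re - 1) (x.re + 1)).subset Set.diff_subset)
  have hFclosed : IsClosed ((P ∩ S) \ {x}) :=
    hFfin.isClosed
  have hx : x ∈ (((P ∩ S) \ {x})ᶜ : Set ℂ) := by
    simp
  have h1 : ∀ᶠ z in 𝓝 x, z ∈ (((P ∩ S) \ {x})ᶜ : Set ℂ) :=
    hFclosed.isOpen_compl.mem_nhds hx
  have h2 : ∀ᶠ z in 𝓝 x, z ∈ {z : ℂ | x.re - 1 < z.re ∧ z.re < x.re + 1} := by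
    have : IsOpen {z : ℂ | x.re - 1 < z.re ∧ z.re < x.re + 1} := by
      apply IsOpen.inter
      · exact isOpen_lt continuous_const Complex.continuous_re
      · exact isOpen_lt Complex.continuous_re continuous_const
    exact this.mem_nhds ⟨by linarith, by linarith⟩
  filter_upwards [eventually_nhdsWithin_of_eventually_nhds h1,
    eventually_nhdsWithin_of_eventually_nhds h2, self_mem_nhdsWithin] with z hz1 hz2 hz3 hzP
  exact hz1 ⟨⟨hzP, le_of_lt hz2.1, le_of_lt hz2.2⟩, hz3⟩

end Aux

open Filter Topology in
/-- Inversion of `1 + f` for a smoothing Mellin symbol `f`: there are an asymptotic type `Q`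
and a smoothing Mellin symbol `l` of type `Q` with `(1 + f(z))(1 + l(z)) = 1` for all
`z ∉ P ∪ Q`. -/
theorem stmt14 (P : Set ℂ) (f : ℂ → ℂ) (hf : SmoothingMellinSymbol P f) :
    ∃ (Q : Set ℂ) (l : ℂ → ℂ), SmoothingMellinSymbol Q l ∧
      ∀ z : ℂ, z ∉ P ∪ Q → (1 + f z) * (1 + l z) = 1 := by
  obtain ⟨hP, hdiff, hmero, hdecay⟩ := hf
  set g : ℂ → ℂ := fun z => 1 + f z with hg
  have hPopen : IsOpen Pᶜ := hP.1.isOpen_compl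
  have hgdiff : DifferentiableOn ℂ g Pᶜ :=
    (differentiableOn_const 1).add hdiff
  have hganal : AnalyticOnNhd ℂ g Pᶜ := hgdiff.analyticOnNhd hPopen
  -- decay of `f` forces `|f| ≤ 1/2` high up in each strip
  have hhalf : ∀ c c' : ℝ, c ≤ c' → ∃ T > (0 : ℝ), ∀ z : ℂ,
      c ≤ z.re → z.re ≤ c' → T ≤ |z.im| → ‖f z‖ ≤ 1 / 2 := by
    intro c c' hcc
    obtain ⟨C, hC, T, hT, hbound⟩ := hdecay c c' hcc 1
    refine ⟨max T (2 * C), lt_of_lt_of_le hT (le_max_left _ _), fun z h1 h2 h3 => ?_⟩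
    have hTz : T ≤ |z.im| := le_trans (le_max_left _ _) h3
    have hCz : 2 * C ≤ |z.im| := le_trans (le_max_right _ _) h3
    have h4 := hbound z h1 h2 hTz
    have h5 : (1 + |z.im|) ^ (-((1 : ℕ) : ℝ)) = (1 + |z.im|)⁻¹ := by
      rw [Nat.cast_one, Real.rpow_neg_one]
    rw [h5] at h4
    have h6 : (0 : ℝ) < 1 + |z.im| := by positivity
    calc ‖f z‖ ≤ C * (1 + |z.im|)⁻¹ := h4
      _ ≤ C * (2 * C)⁻¹ := by
          apply mul_le_mul_of_nonneg_left _ (le_of_lt hC)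
          apply inv_anti₀ (by positivity)
          linarith
      _ = 1 / 2 := by field_simp
  -- a point where `g ≠ 0`
  have hwit : ∃ w : ℂ, w ∈ Pᶜ ∧ g w ≠ 0 := by
    obtain ⟨T, hT, hb⟩ := hhalf 0 0 le_rfl
    obtain ⟨M, hM⟩ := ((hP.2 0 0).image Complex.im).bddAbove
    set t : ℝ := max T (M + 1) with ht
    refine ⟨⟨0, t⟩, ?_, ?_⟩
    · intro hmem
      have : t ∈ Complex.im '' (P ∩ {z : ℂ | 0 ≤ z.re ∧ z.re ≤ 0}) :=
        ⟨⟨0, t⟩, ⟨hmem, le_rfl, le_rfl⟩, rfl⟩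
      have := hM this
      have : M + 1 ≤ M := le_trans (le_max_right T (M + 1)) this
      linarith
    · intro h0
      have hfw : f ⟨0, t⟩ = -1 := by
        have : (1 : ℂ) + f ⟨0, t⟩ = 0 := h0
        linear_combination this
      have htpos : 0 < t := lt_of_lt_of_le hT (le_max_left _ _)
      have := hb ⟨0, t⟩ le_rfl le_rfl (by rw [_root_.abs_of_pos htpos]; exact le_max_left _ _)
      rw [hfw] at this
      simp at this
      linarith
  obtain ⟨w, hwP, hww⟩ := hwit
  have hne : ¬ Set.EqOn g 0 Pᶜ := fun h => hww (h hwP)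
  -- zeros of g outside P
  set Z : Set ℂ := {z | z ∉ P ∧ g z = 0} with hZ
  -- no accumulation of zeros anywhere
  have hacc : ∀ x : ℂ, ¬ AccPt x (𝓟 Z) := by
    intro x hx
    have hfreq : ∃ᶠ z in 𝓝[≠] x, z ∈ Z := by
      rw [Filter.frequently_mem_iff_neBot]; exact hx
    have hfreq0 : ∃ᶠ z in 𝓝[≠] x, g z = 0 := hfreq.mono fun z hz => hz.2
    by_cases hxP : x ∈ P
    · -- meromorphic case
      have hm : MeromorphicAt g x := (MeromorphicAt.const 1 x).add (hmero x hxP)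
      rcases eq_or_ne (meromorphicOrderAt g x) ⊤ with hord | hord
      · -- g vanishes on a punctured neighborhood; transfer to a nearby point of Pᶜ
        have hev : ∀ᶠ z in 𝓝[≠] x, g z = 0 ∧ z ∉ P :=
          (meromorphicOrderAt_eq_top_iff.mp hord).and (hP.eventually_not_mem x)
        rw [eventually_nhdsWithin_iff] at hev
        obtain ⟨ε, hε, hball⟩ := Metric.eventually_nhds_iff.mp hev
        set y : ℂ := x + (ε / 2 : ℝ) with hy
        have hε2 : ((ε / 2 : ℝ) : ℂ) ≠ 0 := by
          exact_mod_cast (by positivity : (ε / 2 : ℝ) ≠ 0)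
        have hyx : y ≠ x := by
          rw [hy]
          simpa using hε2
        have hyd : dist y x < ε := by
          rw [hy, dist_eq_norm, add_sub_cancel_left, Complex.norm_real,
            Real.norm_eq_abs, _root_.abs_of_pos (by positivity)]
          linarith
        have hyZ : g y = 0 ∧ y ∉ P := hball hyd hyx
        have hfreqy : ∃ᶠ z in 𝓝[≠] y, g z = 0 := by
          apply Filter.Eventually.frequently
          have h1 : ∀ᶠ z in 𝓝 y, dist z x < ε :=
            (Metric.isOpen_ball.eventually_mem (by simpa [Metric.mem_ball] using hyd))
          have h2 : ∀ᶠ z in 𝓝 y, z ≠ x := eventually_ne_nhds hyx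
          filter_upwards [eventually_nhdsWithin_of_eventually_nhds h1,
            eventually_nhdsWithin_of_eventually_nhds h2] with z hz1 hz2
          exact (hball hz1 hz2).1
        exact hne (hganal.eqOn_zero_of_preconnected_of_frequently_eq_zero
          hP.isPreconnected_compl hyZ.2 hfreqy)
      · -- finite order: g is eventually nonzero on the punctured neighborhood
        obtain ⟨n, hn⟩ := WithTop.ne_top_iff_exists.mp hord
        obtain ⟨h, hh_an, hh_ne, hh_eq⟩ := (meromorphicOrderAt_eq_int_iff (n := n) hm).mp hn.symm
        have hh_ev : ∀ᶠ z in 𝓝 x, h z ≠ 0 :=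
          hh_an.continuousAt.eventually_ne hh_ne
        have : ∀ᶠ z in 𝓝[≠] x, g z ≠ 0 := by
          filter_upwards [hh_eq, eventually_nhdsWithin_of_eventually_nhds hh_ev,
            self_mem_nhdsWithin] with z h1 h2 h3
          rw [h1]
          exact smul_ne_zero (zpow_ne_zero _ (sub_ne_zero.mpr h3)) h2
        obtain ⟨z, hz1, hz2⟩ := (hfreq0.and_eventually this).exists
        exact hz2 hz1
    · -- analytic case: identity theorem
      exact hne (hganal.eqOn_zero_of_preconnected_of_frequently_eq_zero
        hP.isPreconnected_compl hxP hfreq0)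
  -- Z has finite intersection with every strip
  have hZfin : ∀ c c' : ℝ, (Z ∩ {z : ℂ | c ≤ z.re ∧ z.re ≤ c'}).Finite := by
    intro c c'
    by_cases hcc : c ≤ c'
    · obtain ⟨T, hT, hb⟩ := hhalf c c' hcc
      set K : Set ℂ := {z : ℂ | (c ≤ z.re ∧ z.re ≤ c') ∧ |z.im| ≤ T} with hK
      have hKclosed : IsClosed K := by
        apply IsClosed.inter
        · exact IsClosed.inter (isClosed_le continuous_const Complex.continuous_re)
            (isClosed_le Complex.continuous_re continuous_const)
        · exact isClosed_le (continuous_abs.comp Complex.continuous_im) continuous_const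
      have hKcompact : IsCompact K := by
        apply IsCompact.of_isClosed_subset
          (isCompact_closedBall (0 : ℂ) (max |c| |c'| + T)) hKclosed
        intro z hz
        rw [Metric.mem_closedBall, dist_zero_right]
        calc ‖z‖ ≤ |z.re| + |z.im| := Complex.norm_le_abs_re_add_abs_im z
          _ ≤ max |c| |c'| + T := by
              apply add_le_add _ hz.2
              rcases le_or_gt 0 z.re with h | h
              · rw [_root_.abs_of_nonneg h]
                exact le_trans (le_trans hz.1.2 (le_abs_self _)) (le_max_right _ _)
              · rw [_root_.abs_of_neg h]
                have := hz.1.1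
                calc -z.re ≤ -c := by linarith
                  _ ≤ |c| := neg_le_abs c
                  _ ≤ max |c| |c'| := le_max_left _ _
      have hsub : Z ∩ {z : ℂ | c ≤ z.re ∧ z.re ≤ c'} ⊆ K := by
        rintro z ⟨⟨hzP, hz0⟩, hzs⟩
        refine ⟨hzs, ?_⟩
        by_contra hcon
        push_neg at hcon
        have := hb z hzs.1 hzs.2 (le_of_lt hcon)
        have hfz : f z = -1 := by
          have : (1 : ℂ) + f z = 0 := hz0
          linear_combination this
        rw [hfz] at this
        simp at this
        linarith
      by_contra hinf
      rw [← Set.not_infinite, not_not] at hinf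
      obtain ⟨x, _, hx⟩ := hinf.exists_accPt_of_subset_isCompact hKcompact hsub
      exact hacc x (hx.mono (Filter.principal_mono.2 Set.inter_subset_left))
    · have : Z ∩ {z : ℂ | c ≤ z.re ∧ z.re ≤ c'} = ∅ := by
        ext z; simp only [Set.mem_inter_iff, Set.mem_setOf_eq, Set.mem_empty_iff_false,
          iff_false]
        rintro ⟨_, h1, h2⟩; exact hcc (le_trans h1 h2)
      rw [this]; exact Set.finite_empty
  -- Q and its properties
  set Q : Set ℂ := P ∪ Z with hQ
  have hQclosed : IsClosed Q := by
    rw [← isOpen_compl_iff]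
    rw [isOpen_iff_mem_nhds]
    intro x hx
    simp only [Set.mem_compl_iff, hQ, Set.mem_union, not_or] at hx
    obtain ⟨hxP, hxZ⟩ := hx
    have hgx : g x ≠ 0 := fun h => hxZ ⟨hxP, h⟩
    have hU : IsOpen (Pᶜ ∩ g ⁻¹' {(0 : ℂ)}ᶜ) :=
      (hgdiff.continuousOn).isOpen_inter_preimage hPopen isOpen_compl_singleton
    have hxU : x ∈ Pᶜ ∩ g ⁻¹' {(0 : ℂ)}ᶜ := ⟨hxP, hgx⟩
    filter_upwards [hU.mem_nhds hxU] with z hz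
    simp only [Set.mem_compl_iff, hQ, Set.mem_union, not_or]
    exact ⟨hz.1, fun hzZ => hz.2 hzZ.2⟩
  have hQtype : MellinAsympType Q := by
    refine ⟨hQclosed, fun c c' => ?_⟩
    have : Q ∩ {z : ℂ | c ≤ z.re ∧ z.re ≤ c'} =
        (P ∩ {z : ℂ | c ≤ z.re ∧ z.re ≤ c'}) ∪ (Z ∩ {z : ℂ | c ≤ z.re ∧ z.re ≤ c'}) := by
      rw [hQ, Set.union_inter_distrib_right]
    rw [this]
    exact (hP.2 c c').union (hZfin c c')
  -- the inverse symbol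
  set l : ℂ → ℂ := fun z => (g z)⁻¹ - 1 with hl
  have hgne : ∀ z ∈ Qᶜ, g z ≠ 0 := by
    intro z hz
    simp only [Set.mem_compl_iff, hQ, Set.mem_union, not_or] at hz
    exact fun h => hz.2 ⟨hz.1, h⟩
  have hQsub : Qᶜ ⊆ Pᶜ := Set.compl_subset_compl.2 Set.subset_union_left
  refine ⟨Q, l, ⟨hQtype, ?_, ?_, ?_⟩, ?_⟩
  · -- differentiability
    exact ((hgdiff.mono hQsub).inv hgne).sub (differentiableOn_const 1)
  · -- meromorphy
    intro q hq
    have hgm : MeromorphicAt g q := by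
      rcases hq with hq | hq
      · exact (MeromorphicAt.const 1 q).add (hmero q hq)
      · exact ((hganal q hq.1).meromorphicAt)
    exact hgm.inv.sub (MeromorphicAt.const 1 q)
  · -- decay
    intro c c' hcc N
    obtain ⟨C, hC, T, hT, hbound⟩ := hdecay c c' hcc N
    obtain ⟨T₂, hT₂, hb2⟩ := hhalf c c' hcc
    refine ⟨2 * C, by positivity, max T T₂, lt_of_lt_of_le hT (le_max_left _ _),
      fun z h1 h2 h3 => ?_⟩
    have hTz : T ≤ |z.im| := le_trans (le_max_left _ _) h3
    have hT₂z : T₂ ≤ |z.im| := le_trans (le_max_right _ _) h3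
    have hfhalf : ‖f z‖ ≤ 1 / 2 := hb2 z h1 h2 hT₂z
    have hglow : (1 : ℝ) / 2 ≤ ‖g z‖ := by
      have h7 := norm_sub_norm_le (1 : ℂ) (-(f z))
      rw [sub_neg_eq_add] at h7
      simp only [norm_one, norm_neg] at h7
      show (1 : ℝ) / 2 ≤ ‖1 + f z‖
      linarith
    have hgz : g z ≠ 0 := by
      intro h
      rw [h] at hglow
      simp at hglow
      linarith
    have hlval : l z = -f z / g z := by
      rw [hl]
      field_simp [hgz]
      rw [hg]
      ring
    rw [hlval]
    rw [norm_div, norm_neg]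
    have hfb := hbound z h1 h2 hTz
    have hpow : (0 : ℝ) < (1 + |z.im|) ^ (-(N : ℝ)) := by positivity
    calc ‖f z‖ / ‖g z‖
        ≤ ‖f z‖ / (1 / 2) := by
          apply div_le_div_of_nonneg_left (norm_nonneg _) (by norm_num) hglow
      _ = 2 * ‖f z‖ := by ring
      _ ≤ 2 * (C * (1 + |z.im|) ^ (-(N : ℝ))) := by linarith
      _ = 2 * C * (1 + |z.im|) ^ (-(N : ℝ)) := by ring
  · -- the inversion identity
    intro z hz
    simp only [Set.mem_union, not_or] at hz
    have hgz : g z ≠ 0 := fun h => hz.2 (Or.inr ⟨hz.1, h⟩)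
    show g z * (1 + ((g z)⁻¹ - 1)) = 1
    field_simp
    ring
end
end
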